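/- arXiv:1506.02781 — 2 statements merged into one kernel-verified Lean document; each statement's English description precedes it below -/
import Mathlib

section
/- For every q ≥ 1 and all vectors x, y in ℝ^d, the monotonicity inequality (|x|^(q-1) x - |y|^(q-1) y) · (x - y) ≥ 2^(1-q) |x - y|^(q+1) holds; in particular the left-hand side is nonnegative. -/
open scoped RealInnerProductSpace NNReal

lemma conv_aux {a b q : ℝ} (ha : 0 ≤ a) (hb : 0 ≤ b) (hq : 1 ≤ q) :
    (2:ℝ) ^ (1 - q) * (a + b) ^ q ≤ a ^ q + b ^ q := by
  have h := NNReal.rpow_add_le_mul_rpow_add_rpow a.toNNReal b.toNNReal hq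
  have h2 : ((a.toNNReal + b.toNNReal : ℝ≥0) : ℝ) = a + b := by
    simp [Real.coe_toNNReal, ha, hb]
  have h' : (a + b) ^ q ≤ (2:ℝ) ^ (q-1) * (a ^ q + b ^ q) := by
    have := NNReal.coe_le_coe.2 h
    push_cast [NNReal.coe_rpow, Real.coe_toNNReal _ ha, Real.coe_toNNReal _ hb] at this
    simpa [h2] using this
  have h2q : (0:ℝ) < 2 ^ (q-1) := Real.rpow_pos_of_pos (by norm_num) _
  have : (2:ℝ) ^ (1-q) = ((2:ℝ) ^ (q-1))⁻¹ := by
    rw [← Real.rpow_neg (by norm_num)]; ring_nf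
  rw [this, inv_mul_le_iff₀ h2q] at *
  linarith [h']

lemma rpow_mul_self {a q : ℝ} (ha : 0 ≤ a) (hq : 1 ≤ q) : a ^ (q-1) * a = a ^ q := by
  rcases eq_or_lt_of_le ha with h | h
  · rw [← h]
    simp [Real.zero_rpow (by positivity : q ≠ 0)]
  · nth_rewrite 2 [← Real.rpow_one a]
    rw [← Real.rpow_add h]
    norm_num

lemma rpow_split {t q : ℝ} (ht : 0 ≤ t) (hq : 1 ≤ q) : t ^ (q+1) = t ^ (q-1) * t^2 := by
  rcases eq_or_lt_of_le ht with h | h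
  · rw [← h]
    rw [Real.zero_rpow (by positivity : q + 1 ≠ 0)]
    ring
  · rw [show q + 1 = (q-1) + 2 by ring, Real.rpow_add h, ← Real.rpow_natCast t 2]
    norm_num

lemma mul_nonneg_of_nonpos_nonpos' {a b : ℝ} (ha : a ≤ 0) (hb : b ≤ 0) : 0 ≤ a * b := by
  nlinarith

lemma key {a b t q : ℝ} (ha : 0 ≤ a) (hb : 0 ≤ b) (ht : 0 ≤ t) (hq : 1 ≤ q)
    (htab : t ≤ a + b) :
    (2:ℝ)^(1-q) * t^(q+1)
      ≤ (a^(q-1) + b^(q-1))/2 * t^2 + (a^(q-1) - b^(q-1)) * (a^2 - b^2) / 2 := by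
  set A := a^(q-1) with hA
  set B := b^(q-1) with hB
  have hq' : (0:ℝ) ≤ q - 1 := by linarith
  have hC : 0 ≤ (A - B) * (a^2 - b^2) := by
    rcases le_total a b with h | h
    · have h1 : A ≤ B := Real.rpow_le_rpow ha h hq'
      have h2 : a^2 ≤ b^2 := pow_le_pow_left₀ ha h 2
      exact mul_nonneg_of_nonpos_nonpos' (by linarith) (by linarith)
    · have h1 : B ≤ A := Real.rpow_le_rpow hb h hq'
      have h2 : b^2 ≤ a^2 := pow_le_pow_left₀ hb h 2
      exact mul_nonneg (by linarith) (by linarith)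
  have h2q : (0:ℝ) < 2 ^ (1-q) := Real.rpow_pos_of_pos (by norm_num) _
  have hsplit : t^(q+1) = t^(q-1) * t^2 := rpow_split ht hq
  have hmono : t^(q-1) ≤ (a+b)^(q-1) := Real.rpow_le_rpow ht htab hq'
  have step1 : (2:ℝ)^(1-q) * t^(q+1) ≤ ((2:ℝ)^(1-q) * (a+b)^(q-1)) * t^2 := by
    rw [hsplit]
    have := mul_le_mul_of_nonneg_right hmono (sq_nonneg t)
    nlinarith
  rcases le_or_gt ((2:ℝ)^(1-q) * (a+b)^(q-1)) ((A+B)/2) with h | h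
  · have := mul_le_mul_of_nonneg_right h (sq_nonneg t)
    linarith
  · have htsq : t^2 ≤ (a+b)^2 := pow_le_pow_left₀ ht htab 2
    have hDt : ((2:ℝ)^(1-q) * (a+b)^(q-1) - (A+B)/2) * t^2
        ≤ ((2:ℝ)^(1-q) * (a+b)^(q-1) - (A+B)/2) * (a+b)^2 :=
      mul_le_mul_of_nonneg_left htsq (by linarith)
    have hab : (0:ℝ) ≤ a + b := by linarith
    have hconv := conv_aux ha hb hq
    have hAa : A * a = a ^ q := rpow_mul_self ha hq
    have hBb : B * b = b ^ q := rpow_mul_self hb hq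
    have hsab : (a+b)^(q+1) = (a+b)^(q-1) * (a+b)^2 := rpow_split hab hq
    have hsab2 : (a+b)^(q-1) * (a+b) = (a+b)^q := rpow_mul_self hab hq
    -- 2^(1-q) * (a+b)^(q-1) * (a+b)^2 ≤ (a^q + b^q) * (a+b)
    have hmain : (2:ℝ)^(1-q) * (a+b)^(q-1) * (a+b)^2 ≤ (a^q + b^q) * (a+b) := by
      have := mul_le_mul_of_nonneg_right hconv hab
      calc (2:ℝ)^(1-q) * (a+b)^(q-1) * (a+b)^2
          = (2:ℝ)^(1-q) * (a+b)^q * (a+b) := by rw [← hsab2]; ring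
        _ ≤ (a^q + b^q) * (a+b) := this
    nlinarith [hmain, hDt, step1, hAa, hBb]

/-- Monotonicity of the `q`-Laplacian-type vector field: for `q ≥ 1` and all `x, y ∈ ℝ^d`,
`(|x|^(q-1) x - |y|^(q-1) y) · (x - y) ≥ 2^(1-q) |x - y|^(q+1) ≥ 0`. -/
theorem qLaplace_monotone (d : ℕ) (q : ℝ) (hq : 1 ≤ q)
    (x y : EuclideanSpace ℝ (Fin d)) :
    (2:ℝ) ^ (1 - q) * ‖x - y‖ ^ (q + 1)
      ≤ (inner ℝ (‖x‖ ^ (q - 1) • x - ‖y‖ ^ (q - 1) • y) (x - y) : ℝ) ∧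
    0 ≤ (inner ℝ (‖x‖ ^ (q - 1) • x - ‖y‖ ^ (q - 1) • y) (x - y) : ℝ) := by
  have ha : (0:ℝ) ≤ ‖x‖ := norm_nonneg x
  have hb : (0:ℝ) ≤ ‖y‖ := norm_nonneg y
  have ht : (0:ℝ) ≤ ‖x - y‖ := norm_nonneg _
  have htab : ‖x - y‖ ≤ ‖x‖ + ‖y‖ := norm_sub_le x y
  have hst : ‖x - y‖^2 = ‖x‖^2 - 2 * (inner ℝ x y : ℝ) + ‖y‖^2 := norm_sub_sq_real x y
  have hexp : (inner ℝ (‖x‖ ^ (q - 1) • x - ‖y‖ ^ (q - 1) • y) (x - y) : ℝ)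
      = ‖x‖^(q-1) * (‖x‖^2 - (inner ℝ x y : ℝ))
        + ‖y‖^(q-1) * (‖y‖^2 - (inner ℝ x y : ℝ)) := by
    simp only [inner_sub_left, inner_sub_right, real_inner_smul_left,
      real_inner_self_eq_norm_sq, real_inner_comm y x]
    ring
  have hkey := key ha hb ht hq htab
  have hmain : (2:ℝ) ^ (1 - q) * ‖x - y‖ ^ (q + 1)
      ≤ (inner ℝ (‖x‖ ^ (q - 1) • x - ‖y‖ ^ (q - 1) • y) (x - y) : ℝ) := by
    rw [hexp]
    rw [hst] at hkey
    linarith [hkey]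
  refine ⟨hmain, le_trans ?_ hmain⟩
  positivity
end

section
/- Let q ≥ 1 be real and x, y ∈ ℝ^d. Then |x|^(q-1) x - |y|^(q-1) y = (x - y) ∫₀¹ |y + σ(x - y)|^(q-1) dσ + (q - 1) ∫₀¹ L(y + σ(x - y), x - y) dσ, where L(z, w) := |z|^(q-3) (z · w) z (with L(0, w) := 0). -/
open scoped RealInnerProductSpace
open MeasureTheory Filter Topology Real

/-- Representation formula: for `q ≥ 1` and `x, y ∈ ℝ^d`,
`|x|^(q-1) x - |y|^(q-1) y = (x-y) ∫₀¹ |y+σ(x-y)|^(q-1) dσ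
  + (q-1) ∫₀¹ L(y+σ(x-y), x-y) dσ`, where `L(z,w) = |z|^(q-3) (z·w) z`. -/
theorem qLaplace_representation (d : ℕ) (q : ℝ) (hq : 1 ≤ q)
    (x y : EuclideanSpace ℝ (Fin d)) :
    (‖x‖ ^ (q - 1)) • x - (‖y‖ ^ (q - 1)) • y
      = (∫ σ in (0:ℝ)..1, ‖y + σ • (x - y)‖ ^ (q - 1)) • (x - y)
        + (q - 1) •
          ∫ σ in (0:ℝ)..1,
            ((‖y + σ • (x - y)‖ ^ (q - 3)) * (inner ℝ (y + σ • (x - y)) (x - y) : ℝ))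
              • (y + σ • (x - y)) := by
  by_cases hq1 : q = 1
  · subst hq1
    simp
  have hq' : 1 < q := lt_of_le_of_ne hq (Ne.symm hq1)
  have hq0 : q ≠ 0 := by linarith
  have hq10 : q - 1 ≠ 0 := by intro h; apply hq1; linarith
  set w : EuclideanSpace ℝ (Fin d) := x - y with hw
  set z : ℝ → EuclideanSpace ℝ (Fin d) := fun σ => y + σ • w with hzdef
  -- continuity of z
  have hzc : Continuous z := by
    apply continuous_const.add (continuous_id.smul continuous_const)
  -- derivative of z
  have hzd : ∀ σ : ℝ, HasDerivAt z w σ := by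
    intro σ
    have h1 : HasDerivAt (fun t : ℝ => t • w) ((1:ℝ) • w) σ :=
      (hasDerivAt_id σ).smul_const w
    exact (by simpa using h1 : HasDerivAt (fun t : ℝ => t • w) w σ).const_add y
  set F : ℝ → EuclideanSpace ℝ (Fin d) := fun σ => (‖z σ‖ ^ (q - 1)) • z σ with hFdef
  set F' : ℝ → EuclideanSpace ℝ (Fin d) :=
    fun σ => (‖z σ‖ ^ (q - 1)) • w + (q - 1) • ((‖z σ‖ ^ (q - 3) * ⟪z σ, w⟫) • z σ) with hF'def
  -- derivative of F
  have hderiv : ∀ σ : ℝ, HasDerivAt F (F' σ) σ := by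
    intro σ
    by_cases hz0 : z σ = 0
    · -- at a zero of z
      have hF'0 : F' σ = 0 := by
        simp [hF'def, hz0, Real.zero_rpow hq10]
      rw [hF'0, hasDerivAt_iff_tendsto]
      have hzt : ∀ t : ℝ, z t = (t - σ) • w := by
        intro t
        have : z t - z σ = (t - σ) • w := by
          simp only [hzdef]
          rw [sub_smul]
          abel
        rw [hz0, sub_zero] at this
        exact this
      have heq : ∀ t : ℝ, ‖t - σ‖⁻¹ * ‖F t - F σ - (t - σ) • (0:EuclideanSpace ℝ (Fin d))‖
          = |t - σ| ^ (q - 1) * ‖w‖ ^ q := by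
        intro t
        have hFσ : F σ = 0 := by simp [hFdef, hz0]
        have hFt : ‖F t‖ = ‖z t‖ ^ (q - 1) * ‖z t‖ := by
          rw [hFdef]
          rw [norm_smul, Real.norm_eq_abs, abs_of_nonneg (Real.rpow_nonneg (norm_nonneg _) _)]
        rw [smul_zero, hFσ, sub_zero, sub_zero, hFt, hzt t, norm_smul, Real.norm_eq_abs]
        rcases eq_or_ne t σ with h | h
        · simp [h, Real.zero_rpow hq10, Real.zero_rpow hq0]
        · have ht : |t - σ| ≠ 0 := by
            simpa [abs_eq_zero, sub_eq_zero] using h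
          rcases eq_or_ne ‖w‖ 0 with hw0 | hw0
          · simp [hw0, Real.zero_rpow hq10, Real.zero_rpow hq0]
          · rw [Real.mul_rpow (abs_nonneg _) (norm_nonneg _)]
            have h3 : ‖w‖ ^ q = ‖w‖ ^ (q - 1) * ‖w‖ := by
              rw [← Real.rpow_add_one hw0]; norm_num
            rw [h3]
            field_simp
      have hgoal : Tendsto (fun t : ℝ => |t - σ| ^ (q - 1) * ‖w‖ ^ q) (𝓝 σ) (𝓝 0) := by
        have hc : ContinuousAt (fun t : ℝ => |t - σ| ^ (q - 1) * ‖w‖ ^ q) σ := by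
          apply ContinuousAt.mul _ continuousAt_const
          exact ContinuousAt.rpow_const
            ((continuous_id.sub continuous_const).abs.continuousAt) (Or.inr (by linarith))
        have := hc.tendsto
        simpa [Real.zero_rpow hq10] using this
      exact Tendsto.congr (fun t => (heq t).symm) hgoal
    · -- z σ ≠ 0
      have hzn : ‖z σ‖ ≠ 0 := norm_ne_zero_iff.mpr hz0
      have hzp : (0:ℝ) < ‖z σ‖ := norm_pos_iff.mpr hz0
      -- derivative of ‖z ·‖
      have hsq : HasDerivAt (fun t => ‖z t‖ ^ 2) (2 * ⟪z σ, w⟫) σ := (hzd σ).norm_sq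
      have hne2 : (‖z σ‖:ℝ) ^ 2 ≠ 0 := pow_ne_zero 2 hzn
      have hnrm : HasDerivAt (fun t => ‖z t‖) (⟪z σ, w⟫ / ‖z σ‖) σ := by
        have h1 := hsq.sqrt hne2
        have h2 : (fun t => Real.sqrt (‖z t‖ ^ 2)) = fun t => ‖z t‖ := by
          funext t; exact Real.sqrt_sq (norm_nonneg _)
        rw [h2] at h1
        convert h1 using 1
        rw [Real.sqrt_sq (norm_nonneg _)]
        field_simp
      have hr : HasDerivAt (fun t => ‖z t‖ ^ (q - 1))
          ((⟪z σ, w⟫ / ‖z σ‖) * (q - 1) * ‖z σ‖ ^ (q - 1 - 1)) σ :=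
        hnrm.rpow_const (Or.inl hzn)
      have hFd := hr.smul (hzd σ)
      refine hFd.congr_deriv ?_
      simp only [hF'def]
      have key : (⟪z σ, w⟫ / ‖z σ‖ * (q - 1) * ‖z σ‖ ^ (q - 1 - 1)) • z σ
          = (q - 1) • ((‖z σ‖ ^ (q - 3) * ⟪z σ, w⟫) • z σ) := by
        rw [smul_smul]
        congr 1
        have : ‖z σ‖ ^ (q - 1 - 1) = ‖z σ‖ ^ (q - 3) * ‖z σ‖ := by
          rw [← Real.rpow_add_one hzn]
          congr 1
          ring
        rw [this]
        field_simp
      rw [← key]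
  -- continuity of first integrand
  have hc1 : Continuous fun σ => ‖z σ‖ ^ (q - 1) := by
    rw [continuous_iff_continuousAt]
    intro σ
    exact (hzc.norm.continuousAt).rpow_const (Or.inr (by linarith))
  -- continuity of second integrand
  have hbound : ∀ t : ℝ, ‖(‖z t‖ ^ (q - 3) * ⟪z t, w⟫) • z t‖ ≤ ‖z t‖ ^ (q - 1) * ‖w‖ := by
    intro t
    by_cases hzt : z t = 0
    · simp [hzt, Real.zero_rpow hq10]
    · have hzn : ‖z t‖ ≠ 0 := norm_ne_zero_iff.mpr hzt
      have hzp : (0:ℝ) < ‖z t‖ := norm_pos_iff.mpr hzt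
      rw [norm_smul, Real.norm_eq_abs, abs_mul,
        abs_of_nonneg (Real.rpow_nonneg (norm_nonneg _) _)]
      have hinner : |⟪z t, w⟫| ≤ ‖z t‖ * ‖w‖ := abs_real_inner_le_norm _ _
      calc ‖z t‖ ^ (q - 3) * |⟪z t, w⟫| * ‖z t‖
          ≤ ‖z t‖ ^ (q - 3) * (‖z t‖ * ‖w‖) * ‖z t‖ := by
            gcongr
        _ = ‖z t‖ ^ (q - 1) * ‖w‖ := by
            rw [show q - 1 = (q - 3) + 1 + 1 by ring, Real.rpow_add_one hzn,
              Real.rpow_add_one hzn]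
            ring
  have hc2 : Continuous fun σ => (‖z σ‖ ^ (q - 3) * ⟪z σ, w⟫) • z σ := by
    rw [continuous_iff_continuousAt]
    intro σ
    by_cases hz0 : z σ = 0
    · have hval : (‖z σ‖ ^ (q - 3) * ⟪z σ, w⟫) • z σ = 0 := by simp [hz0]
      rw [ContinuousAt, hval]
      apply squeeze_zero_norm hbound
      have : Tendsto (fun t => ‖z t‖ ^ (q - 1) * ‖w‖) (𝓝 σ) (𝓝 (‖z σ‖ ^ (q - 1) * ‖w‖)) :=
        ((hc1.continuousAt).mul continuousAt_const)
      simpa [hz0, Real.zero_rpow hq10] using this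
    · have hzn : ‖z σ‖ ≠ 0 := norm_ne_zero_iff.mpr hz0
      exact (((hzc.norm.continuousAt).rpow_const (Or.inl hzn)).mul
        ((hzc.continuousAt).inner continuousAt_const)).smul hzc.continuousAt
  -- integrability
  have hcF' : Continuous F' := by
    rw [hF'def]
    exact (hc1.smul continuous_const).add (hc2.const_smul (q - 1))
  have hint : IntervalIntegrable F' volume 0 1 := hcF'.intervalIntegrable 0 1
  have key := intervalIntegral.integral_eq_sub_of_hasDerivAt (f := F) (f' := F')
    (fun σ _ => hderiv σ) hint
  have hz1 : z 1 = x := by simp [hzdef, hw]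
  have hz0' : z 0 = y := by simp [hzdef]
  have hF1 : F 1 = (‖x‖ ^ (q - 1)) • x := by rw [hFdef]; simp [hz1]
  have hF0 : F 0 = (‖y‖ ^ (q - 1)) • y := by rw [hFdef]; simp [hz0']
  rw [hF1, hF0] at key
  rw [← key]
  rw [hF'def]
  rw [intervalIntegral.integral_add (f := fun σ => ‖z σ‖ ^ (q - 1) • w)
    (g := fun σ => (q - 1) • ((‖z σ‖ ^ (q - 3) * ⟪z σ, w⟫) • z σ))
    ((hc1.smul continuous_const).intervalIntegrable 0 1)
    ((hc2.const_smul (q - 1)).intervalIntegrable 0 1)]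
  rw [intervalIntegral.integral_smul_const, intervalIntegral.integral_smul]
end
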